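/- Let A = (v_0, v_1, …, v_b) be an antenna in a configuration C, meaning v_0 is a leaf of the capture graph, and for each i < b the piece v_i has exactly the neighbors v_{i-1} and v_{i+1} (v_0 has only neighbor v_1). Suppose the leaf v_0 has budget b' with b' < b. Then no capturing sequence empties all of the squares v_0, …, v_b; consequently, the final square of any clearing sequence of C lies in {v_0, …, v_{b'}}. -/

import Mathlib

/-- A configuration assigns to each square an optional budget (`none` = empty). -/
abbrev Config (V : Type) := V → Option ℕ

/-- Apply capture move `(x, y)`: the piece on `x` captures the piece on `y`,
moving to `y` with budget decreased by one. -/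
def applyMove {V : Type} [DecidableEq V] (c : Config V) (m : V × V) : Config V :=
  fun z =>
    if z = m.2 then (c m.1).map (· - 1)
    else if z = m.1 then none
    else c z

/-- A move is valid if the squares are adjacent, the source piece has positive
budget, and the target square is occupied. -/
def ValidMove {V : Type} (adj : V → V → Prop) (c : Config V) (m : V × V) : Prop :=
  adj m.1 m.2 ∧ (∃ b, c m.1 = some (b + 1)) ∧ (c m.2).isSome

def applySeq {V : Type} [DecidableEq V] (c : Config V) : List (V × V) → Config V
  | [] => c
  | m :: s => applySeq (applyMove c m) s

def ValidSeq {V : Type} [DecidableEq V] (adj : V → V → Prop) (c : Config V) :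
    List (V × V) → Prop
  | [] => True
  | m :: s => ValidMove adj c m ∧ ValidSeq adj (applyMove c m) s

/-- `ConfigLE c c'`: same pieces on the same squares, with each budget in `c'`
at least the corresponding budget in `c`. -/
def ConfigLE {V : Type} (c c' : Config V) : Prop :=
  ∀ v, ((c v).isSome ↔ (c' v).isSome) ∧
    ∀ b b', c v = some b → c' v = some b' → b ≤ b'

/-- A clearing sequence: valid and exactly one piece remains. -/
def Clears {V : Type} [DecidableEq V] (adj : V → V → Prop) (c : Config V)
    (s : List (V × V)) : Prop :=
  ValidSeq adj c s ∧ ∃! v, (applySeq c s v).isSome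

/-- `f` is the final square of sequence `s` applied to `c`. -/
def FinalSquare {V : Type} [DecidableEq V] (c : Config V) (s : List (V × V)) (f : V) : Prop :=
  (applySeq c s f).isSome ∧ ∀ v, (applySeq c s v).isSome → v = f

/-- A virtual 0-piece: occupied initially, and never moves during `s`. -/
def Virtual0 {V : Type} (c : Config V) (s : List (V × V)) (v : V) : Prop :=
  (c v).isSome ∧ ∀ m ∈ s, m.1 ≠ v

/-- A virtual 2-piece: occupied initially, and moves at some point during `s`. -/
def Virtual2 {V : Type} (c : Config V) (s : List (V × V)) (v : V) : Prop :=
  (c v).isSome ∧ ∃ m ∈ s, m.1 = v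

/-- The capture graph of a configuration: vertices are squares, with an edge
between two occupied squares whose pieces can capture each other. -/
def captureGraph {V : Type} (adj : V → V → Prop) (hs : Symmetric adj) (c : Config V) :
    SimpleGraph V where
  Adj x y := adj x y ∧ x ≠ y ∧ (c x).isSome ∧ (c y).isSome
  symm := by
    constructor
    intro x y h
    exact ⟨hs h.1, h.2.1.symm, h.2.2.2, h.2.2.1⟩
  loopless := by
    constructor
    intro x h
    exact h.2.1 rfl

/-! ### Auxiliary machinery for `long_antenna` -/

private lemma fin_mk_sub_one {b i : ℕ} (h0 : 0 < i) (hib : i < b) :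
    ((⟨i, by omega⟩ : Fin (b+1)) - 1) = ⟨i - 1, by omega⟩ := by
  apply Fin.ext
  rw [Fin.sub_def]
  show (b + 1 - (1 : Fin (b+1)).val + i) % (b+1) = i - 1
  rw [Fin.val_one', Nat.mod_eq_of_lt (show (1:ℕ) < b+1 by omega),
    show b + 1 - 1 + i = (i-1) + (b+1) by omega, Nat.add_mod_right,
    Nat.mod_eq_of_lt (show i-1 < b+1 by omega)]

private lemma fin_mk_add_one {b i : ℕ} (hib : i < b) :
    ((⟨i, by omega⟩ : Fin (b+1)) + 1) = ⟨i + 1, by omega⟩ := by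
  apply Fin.ext
  rw [Fin.add_def]
  show (i + (1 : Fin (b+1)).val) % (b+1) = i + 1
  rw [Fin.val_one', Nat.mod_eq_of_lt (show (1:ℕ) < b+1 by omega),
    Nat.mod_eq_of_lt (show i+1 < b+1 by omega)]

/-- The invariant: either a "stuck" piece at `q k` with `k ≤ b'` whose antenna
neighbours are empty, or a block `q k, …, q l` of occupied squares with all
lower squares empty, a gap above (if `l < b`), and budget at `q k` at most
`b' - k`. -/
def AntInv {V : Type} (c : Config V) (q : ℕ → V) (b b' : ℕ) (d : Config V) : Prop :=
  (∀ v, (d v).isSome → (c v).isSome) ∧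
  ((∃ k, k ≤ b' ∧ (d (q k)).isSome ∧ d (q (k+1)) = none ∧
      (k = 0 ∨ d (q (k-1)) = none)) ∨
   (∃ k l, k ≤ l ∧ l ≤ b ∧
     (∀ i, k ≤ i → i ≤ l → (d (q i)).isSome) ∧
     (∀ i, i < k → d (q i) = none) ∧
     (l < b → d (q (l+1)) = none) ∧
     (∃ β, d (q k) = some β ∧ β + k ≤ b')))

private lemma ant_step {V : Type} [DecidableEq V] {adj : V → V → Prop}
    (hsa : Symmetric adj) {c : Config V} {q : ℕ → V} {b b' : ℕ} (hb : b' < b)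
    (hqinj : ∀ i j, i ≤ b → j ≤ b → q i = q j → i = j)
    (hleaf' : ∀ x, adj (q 0) x → (c x).isSome → x ≠ q 0 → x = q 1)
    (hpath' : ∀ i, 0 < i → i < b → ∀ x, adj (q i) x → (c x).isSome → x ≠ q i →
      x = q (i-1) ∨ x = q (i+1))
    {d : Config V} {m : V × V} (hinv : AntInv c q b b' d) (hm : ValidMove adj d m) :
    AntInv c q b b' (applyMove d m) := by
  obtain ⟨x, y⟩ := m
  obtain ⟨hxy, ⟨γ, hdx⟩, hdy⟩ := hm
  obtain ⟨hsub, hcase⟩ := hinv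
  set e := applyMove d (x, y) with he
  have hey : e y = (d x).map (· - 1) := by simp [he, applyMove]
  have heval : ∀ z, z ≠ y → z ≠ x → e z = d z := by
    intro z h1 h2; simp [he, applyMove, h1, h2]
  have hsub' : ∀ v, (e v).isSome → (c v).isSome := by
    intro v hv
    by_cases h1 : v = y
    · subst h1; exact hsub _ hdy
    · by_cases h2 : v = x
      · subst h2; exact hsub _ (by rw [hdx]; simp)
      · rw [heval v h1 h2] at hv; exact hsub _ hv
  refine ⟨hsub', ?_⟩
  by_cases hxyeq : x = y
  · -- self-capture: occupancy unchanged, budget at `x` decreases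
    subst hxyeq
    have hz : ∀ z, e z = if z = x then some γ else d z := by
      intro z
      by_cases h : z = x
      · subst h; simp [he, applyMove, hdx]
      · simp [he, applyMove, h]
    rcases hcase with ⟨k, hk1, hk2, hk3, hk4⟩ | ⟨k, l, hkl, hlb, hocc', hbelow, hgap, β, hβ, hβle⟩
    · left
      refine ⟨k, hk1, ?_, ?_, ?_⟩
      · rw [hz]; split_ifs <;> simp [hk2]
      · rw [hz]; split_ifs with h
        · rw [h, hdx] at hk3; cases hk3
        · exact hk3
      · rcases hk4 with h | h
        · exact Or.inl h
        · right; rw [hz]; split_ifs with h2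
          · rw [h2, hdx] at h; cases h
          · exact h
    · right
      refine ⟨k, l, hkl, hlb, ?_, ?_, ?_, ?_⟩
      · intro i h1 h2; rw [hz]; split_ifs <;> simp [hocc' i h1 h2]
      · intro i h1; rw [hz]; split_ifs with h2
        · exfalso; have := hbelow i h1; rw [h2, hdx] at this; cases this
        · exact hbelow i h1
      · intro h1; rw [hz]; split_ifs with h2
        · have := hgap h1; rw [h2, hdx] at this; cases this
        · exact hgap h1
      · by_cases h : q k = x
        · have hβγ : β = γ + 1 := by rw [h, hdx] at hβ; exact (Option.some.inj hβ).symm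
          exact ⟨γ, by rw [hz, if_pos h], by omega⟩
        · exact ⟨β, by rw [hz, if_neg h]; exact hβ, hβle⟩
  · -- genuine move x → y
    have hE : ∀ z, d z = none → e z = none := by
      intro z h
      have hzy : z ≠ y := by intro hh; rw [← hh, h] at hdy; simp at hdy
      by_cases h2 : z = x
      · subst h2; simp [he, applyMove, hxyeq]
      · rw [heval z hzy h2]; exact h
    have hN : e x = none := by simp [he, applyMove, hxyeq]
    have hYs : (e y).isSome := by rw [hey, hdx]; simp
    have hO : ∀ z, z ≠ x → (d z).isSome → (e z).isSome := by
      intro z h1 h2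
      by_cases h3 : z = y
      · subst h3; exact hYs
      · rw [heval z h3 h1]; exact h2
    have hNB : ∀ i, i < b → q i = x → y = q (i+1) ∨ (0 < i ∧ y = q (i-1)) := by
      intro i hib hqx
      have hadj' : adj (q i) y := by rw [hqx]; exact hxy
      have hcy : (c y).isSome := hsub y hdy
      have hny : y ≠ q i := by intro h; exact hxyeq (by rw [hqx] at h; exact h.symm)
      rcases Nat.eq_zero_or_pos i with h0 | h0
      · subst h0; exact Or.inl (hleaf' y hadj' hcy hny)
      · rcases hpath' i h0 hib y hadj' hcy hny with h | h
        · exact Or.inr ⟨h0, h⟩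
        · exact Or.inl h
    have hNB' : ∀ i, i < b → q i = y → x = q (i+1) ∨ (0 < i ∧ x = q (i-1)) := by
      intro i hib hqy
      have hadj' : adj (q i) x := by rw [hqy]; exact hsa hxy
      have hcx : (c x).isSome := hsub x (by rw [hdx]; simp)
      have hnx : x ≠ q i := by intro h; exact hxyeq (by rw [hqy] at h; exact h)
      rcases Nat.eq_zero_or_pos i with h0 | h0
      · subst h0; exact Or.inl (hleaf' x hadj' hcx hnx)
      · rcases hpath' i h0 hib x hadj' hcx hnx with h | h
        · exact Or.inr ⟨h0, h⟩
        · exact Or.inl h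
    rcases hcase with ⟨k, hk1, hk2, hk3, hk4⟩ | ⟨k, l, hkl, hlb, hocc', hbelow, hgap, β, hβ, hβle⟩
    · -- stuck case: nothing can touch q k
      have hkb : k < b := by omega
      have hqknx : q k ≠ x := by
        intro h
        rcases hNB k hkb h with h1 | ⟨h0, h1⟩
        · rw [h1, hk3] at hdy; simp at hdy
        · rcases hk4 with h2 | h2
          · omega
          · rw [h1, h2] at hdy; simp at hdy
      left
      refine ⟨k, hk1, hO _ hqknx hk2, hE _ hk3, ?_⟩
      rcases hk4 with h | h
      · exact Or.inl h
      · exact Or.inr (hE _ h)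
    · -- block case
      have hkb : k < b := by omega
      by_cases hx : ∃ i, k ≤ i ∧ i ≤ l ∧ q i = x
      · obtain ⟨i, hki, hil, hqix⟩ := hx
        by_cases hib : i = b
        · -- the top piece q b moves away
          have hqix : q b = x := hib ▸ hqix
          have hlb2 : l = b := by omega
          by_cases hyk : q k = y
          · -- move (q b, q k) with b = k+1 : produces a stuck piece at q k
            left
            have hxk1 : x = q (k+1) := by
              rcases hNB' k hkb hyk with h | ⟨h0, h⟩
              · exact h
              · rw [h, hbelow (k-1) (by omega)] at hdx; cases hdx
            refine ⟨k, by omega, ?_, ?_, ?_⟩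
            · rw [hyk]; exact hYs
            · rw [← hxk1]; exact hN
            · rcases Nat.eq_zero_or_pos k with h | h
              · exact Or.inl h
              · exact Or.inr (hE _ (hbelow (k-1) (by omega)))
          · right
            refine ⟨k, b-1, by omega, by omega, ?_, ?_, ?_, ?_⟩
            · intro j h1 h2
              refine hO _ ?_ (hocc' j h1 (by omega))
              intro h
              have := hqinj j b (by omega) le_rfl (h.trans hqix.symm)
              omega
            · intro j h1; exact hE _ (hbelow j h1)
            · intro _; rw [show b - 1 + 1 = b by omega, hqix]; exact hN
            · refine ⟨β, ?_, hβle⟩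
              rw [heval _ hyk (fun h => by have := hqinj k b (by omega) le_rfl (h.trans hqix.symm); omega)]
              exact hβ
        · have hib' : i < b := lt_of_le_of_ne (by omega) hib
          rcases hNB i hib' hqix with hy1 | ⟨h0i, hy1⟩
          · -- y = q (i+1)
            have hi1 : i + 1 ≤ l := by
              by_contra hcon
              have hil' : i = l := by omega
              rcases lt_or_eq_of_le hlb with hh | hh
              · rw [hy1, hil', hgap hh] at hdy; simp at hdy
              · omega
            by_cases hik : i = k
            · -- frontier advances: budget decreases
              subst hik
              right
              refine ⟨i+1, l, hi1, hlb, ?_, ?_, ?_, ?_⟩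
              · intro j h1 h2
                refine hO _ ?_ (hocc' j (by omega) h2)
                intro h
                have := hqinj j i (by omega) (by omega) (h.trans hqix.symm)
                omega
              · intro j h1
                rcases Nat.lt_or_ge j i with h2 | h2
                · exact hE _ (hbelow j h2)
                · have : j = i := by omega
                  rw [this, hqix]; exact hN
              · intro h1; exact hE _ (hgap h1)
              · have hβγ : β = γ + 1 := by
                  rw [hqix, hdx] at hβ; exact (Option.some.inj hβ).symm
                refine ⟨γ, ?_, by omega⟩
                rw [← hy1, hey, hdx]; simp
            · -- interior split: left block keeps budget
              have hki' : k < i := lt_of_le_of_ne hki (Ne.symm hik)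
              right
              refine ⟨k, i-1, by omega, by omega, ?_, ?_, ?_, ?_⟩
              · intro j h1 h2
                refine hO _ ?_ (hocc' j h1 (by omega))
                intro h
                have := hqinj j i (by omega) (by omega) (h.trans hqix.symm)
                omega
              · intro j h1; exact hE _ (hbelow j h1)
              · intro _; rw [show i - 1 + 1 = i by omega, hqix]; exact hN
              · refine ⟨β, ?_, hβle⟩
                rw [heval]
                · exact hβ
                · rw [hy1]; intro h
                  have := hqinj k (i+1) (by omega) (by omega) h
                  omega
                · intro h
                  have := hqinj k i (by omega) (by omega) (h.trans hqix.symm)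
                  omega
          · -- y = q (i-1)
            have hki1 : k ≤ i - 1 := by
              by_contra hcon
              rw [hy1, hbelow (i-1) (by omega)] at hdy; simp at hdy
            by_cases hik : i = k + 1
            · -- arrival at the frontier: stuck piece at q k
              left
              refine ⟨k, by omega, ?_, ?_, ?_⟩
              · rw [show q k = y by rw [hy1]; congr 1; omega]; exact hYs
              · rw [show k + 1 = i by omega, hqix]; exact hN
              · rcases Nat.eq_zero_or_pos k with h | h
                · exact Or.inl h
                · exact Or.inr (hE _ (hbelow (k-1) (by omega)))
            · have hki2 : k + 1 < i := by omega
              right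
              refine ⟨k, i-1, by omega, by omega, ?_, ?_, ?_, ?_⟩
              · intro j h1 h2
                refine hO _ ?_ (hocc' j h1 (by omega))
                intro h
                have := hqinj j i (by omega) (by omega) (h.trans hqix.symm)
                omega
              · intro j h1; exact hE _ (hbelow j h1)
              · intro _; rw [show i - 1 + 1 = i by omega, hqix]; exact hN
              · refine ⟨β, ?_, hβle⟩
                rw [heval]
                · exact hβ
                · rw [hy1]; intro h
                  have := hqinj k (i-1) (by omega) (by omega) h
                  omega
                · intro h
                  have := hqinj k i (by omega) (by omega) (h.trans hqix.symm)
                  omega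
      · -- the move does not originate in the block
        right
        have hqky : q k ≠ y := by
          intro h
          rcases hNB' k hkb h with h1 | ⟨h0, h1⟩
          · have hocc1 : (d (q (k+1))).isSome := by rw [← h1, hdx]; simp
            have hk1l : k + 1 ≤ l := by
              by_contra hcon
              have hkl' : k = l := by omega
              rcases lt_or_eq_of_le hlb with hh | hh
              · rw [show k + 1 = l + 1 by omega, hgap hh] at hocc1; simp at hocc1
              · omega
            exact hx ⟨k+1, by omega, hk1l, h1.symm⟩
          · rw [h1, hbelow (k-1) (by omega)] at hdx; cases hdx
        refine ⟨k, l, hkl, hlb, ?_, ?_, ?_, β, ?_, hβle⟩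
        · intro j h1 h2
          exact hO _ (fun h => hx ⟨j, h1, h2, h⟩) (hocc' j h1 h2)
        · intro j h1; exact hE _ (hbelow j h1)
        · intro h1; exact hE _ (hgap h1)
        · rw [heval _ hqky (fun h => hx ⟨k, le_rfl, hkl, h⟩)]; exact hβ

private lemma ant_seq {V : Type} [DecidableEq V] {adj : V → V → Prop}
    (hsa : Symmetric adj) {c : Config V} {q : ℕ → V} {b b' : ℕ} (hb : b' < b)
    (hqinj : ∀ i j, i ≤ b → j ≤ b → q i = q j → i = j)
    (hleaf' : ∀ x, adj (q 0) x → (c x).isSome → x ≠ q 0 → x = q 1)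
    (hpath' : ∀ i, 0 < i → i < b → ∀ x, adj (q i) x → (c x).isSome → x ≠ q i →
      x = q (i-1) ∨ x = q (i+1)) :
    ∀ s (d : Config V), AntInv c q b b' d → ValidSeq adj d s →
      AntInv c q b b' (applySeq d s) := by
  intro s
  induction s with
  | nil => intro d h _; exact h
  | cons m s ih =>
    intro d h hv
    exact ih _ (ant_step hsa hb hqinj hleaf' hpath' h hv.1) hv.2

/-- **Long antenna observation.** Let `A = (v₀, …, v_b)` be an antenna in a
configuration `C`: `v₀` is a leaf of the capture graph with unique neighbor
`v₁`, and each interior `vᵢ` (for `0 < i < b`) has exactly the neighbors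
`v_{i-1}` and `v_{i+1}`. Suppose the leaf `v₀` has budget `b' < b`. Then no
valid capturing sequence empties all the squares `v₀, …, v_b`; consequently, the
final square of any clearing sequence of `C` lies in `{v₀, …, v_{b'}}`. -/
theorem long_antenna {V : Type} [DecidableEq V] (adj : V → V → Prop)
    (hsymm : Symmetric adj) (c : Config V) (b b' : ℕ) (hb : b' < b)
    (p : Fin (b + 1) → V) (hinj : Function.Injective p)
    (hocc : ∀ i, (c (p i)).isSome)
    (hleafBudget : c (p 0) = some b')
    (hleaf : ∀ x, (captureGraph adj hsymm c).Adj (p 0) x → x = p 1)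
    (hpath : ∀ i : Fin (b + 1), 0 < (i : ℕ) → (i : ℕ) < b →
      ∀ x, (captureGraph adj hsymm c).Adj (p i) x → x = p (i - 1) ∨ x = p (i + 1))
    (hadj : ∀ i : Fin (b + 1), (i : ℕ) < b → adj (p i) (p (i + 1))) :
    (∀ s : List (V × V), ValidSeq adj c s → ∃ i, (applySeq c s (p i)).isSome) ∧
    ∀ s f, Clears adj c s → FinalSquare c s f →
      ∃ i : Fin (b + 1), (i : ℕ) ≤ b' ∧ f = p i := by
  classical
  obtain ⟨q, hq⟩ : ∃ q : ℕ → V, ∀ n (h : n ≤ b), q n = p ⟨n, by omega⟩ :=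
    ⟨fun n => p ⟨min n b, by omega⟩,
      fun n h => congrArg p (Fin.ext (by simp [Nat.min_eq_left h]))⟩
  have hqinj : ∀ i j, i ≤ b → j ≤ b → q i = q j → i = j := by
    intro i j hi hj hEq
    rw [hq i hi, hq j hj] at hEq
    simpa using congrArg Fin.val (hinj hEq)
  have h00 : q 0 = p 0 := by
    rw [hq 0 (Nat.zero_le b)]
    exact congrArg p (Fin.ext (by simp))
  have h01 : q 1 = p 1 := by
    rw [hq 1 (by omega)]
    exact congrArg p (Fin.ext (by
      rw [Fin.val_one', Nat.mod_eq_of_lt (show (1:ℕ) < b+1 by omega)]))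
  have hleaf' : ∀ x, adj (q 0) x → (c x).isSome → x ≠ q 0 → x = q 1 := by
    intro x hax hcx hnx
    have := hleaf x ⟨by rw [← h00]; exact hax,
      fun hh => hnx (hh.symm.trans h00.symm), hocc 0, hcx⟩
    rw [h01]; exact this
  have hpath' : ∀ i, 0 < i → i < b → ∀ x, adj (q i) x → (c x).isSome → x ≠ q i →
      x = q (i-1) ∨ x = q (i+1) := by
    intro i h0 hib x hax hcx hnx
    have hi1 : i < b + 1 := by omega
    have hqi : q i = p ⟨i, hi1⟩ := hq i (by omega)
    have hAdj : (captureGraph adj hsymm c).Adj (p ⟨i, hi1⟩) x :=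
      ⟨by rw [← hqi]; exact hax, fun hh => hnx (hh.symm.trans hqi.symm), hocc _, hcx⟩
    rcases hpath ⟨i, hi1⟩ h0 hib x hAdj with h | h
    · left
      rw [h, fin_mk_sub_one h0 hib, ← hq (i-1) (by omega)]
    · right
      rw [h, fin_mk_add_one hib, ← hq (i+1) (by omega)]
  have hbase : AntInv c q b b' c := by
    refine ⟨fun v h => h, Or.inr ⟨0, b, Nat.zero_le b, le_rfl, ?_, ?_, ?_, b', ?_, by omega⟩⟩
    · intro i _ h2; rw [hq i h2]; exact hocc _
    · intro i h; exact absurd h (Nat.not_lt_zero i)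
    · intro h; exact absurd h (lt_irrefl b)
    · rw [h00]; exact hleafBudget
  constructor
  · intro s hs
    obtain ⟨_, hc⟩ := ant_seq hsymm hb hqinj hleaf' hpath' s c hbase hs
    rcases hc with ⟨k, hk1, hk2, _⟩ | ⟨k, l, hkl, hlb, hocc', _⟩
    · exact ⟨⟨k, by omega⟩, by rw [← hq k (by omega)]; exact hk2⟩
    · exact ⟨⟨k, by omega⟩, by rw [← hq k (by omega)]; exact hocc' k le_rfl hkl⟩
  · intro s f hcl hfin
    obtain ⟨_, hc⟩ := ant_seq hsymm hb hqinj hleaf' hpath' s c hbase hcl.1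
    rcases hc with ⟨k, hk1, hk2, _⟩ | ⟨k, l, hkl, hlb, hocc', _, _, β, hβ, hβle⟩
    · refine ⟨⟨k, by omega⟩, by exact hk1, ?_⟩
      rw [← hq k (by omega)]
      exact (hfin.2 _ hk2).symm
    · refine ⟨⟨k, by omega⟩, by show k ≤ b'; omega, ?_⟩
      rw [← hq k (by omega)]
      exact (hfin.2 _ (hocc' k le_rfl hkl)).symm
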